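/- Let N_r ≥ 2 be an integer, define Q_SRS(u) as the two-user SRS outage bound polynomial (with n = 2N_r): Q_SRS(u) = [(N_r−1)/(2N_r−1)]·G_{n,2}(u) + [(N_r+1)/(2(2N_r−1))]·G_{n,3}(u) + ∑_{k=4}^{N_r+1} [2·N_r·C(N_r,k−1)/((2N_r−(k−1))·C(2N_r,k−1))]·G_{n,k}(u) + ∑_{k=4}^{N_r+2} [2·(N_r−1)·C(N_r,k−2)/((2N_r−(k−2))·(2N_r−(k−1))·C(2N_r,k−2))]·G_{n,k}(u), where G_{n,k}(u) = ∑_{i=0}^{k−1} [n!·C(k−1,i)·(−1)^i / ((n−k+i+1)·(n−k)!·(k−1)!)] · u^{n−k+i+1}, and define Q_naive(u) = u^{N_r−1}·(1 + u − u^{N_r}). Then lim_{u→0⁺} Q_naive(u)/Q_SRS(u) = (N_r+1)/2. -/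

import Mathlib

/-- `G n k u = ∑_{i=0}^{k−1} n!·C(k−1,i)·(−1)^i / ((n−k+i+1)(n−k)!(k−1)!) · u^{n−k+i+1}`,
the CDF of the `k`-th largest of `n` i.i.d. random variables expressed as a
polynomial in the common per-entry CDF value `u`. -/
noncomputable def orderCDF (n k : ℕ) (u : ℝ) : ℝ :=
  ∑ i ∈ Finset.range k,
    ((n.factorial : ℝ) * (((k - 1).choose i : ℝ)) * (-1 : ℝ) ^ i
        / (((n : ℝ) - (k : ℝ) + (i : ℝ) + 1) * ((n - k).factorial : ℝ)
            * ((k - 1).factorial : ℝ)))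
      * u ^ (n - k + i + 1)

/-- Two-user SRS outage bound polynomial (with `n = 2·Nr`). -/
noncomputable def Q_SRS (Nr : ℕ) (u : ℝ) : ℝ :=
  ((Nr : ℝ) - 1) / (2 * (Nr : ℝ) - 1) * orderCDF (2 * Nr) 2 u
    + ((Nr : ℝ) + 1) / (2 * (2 * (Nr : ℝ) - 1)) * orderCDF (2 * Nr) 3 u
    + ∑ k ∈ Finset.Icc 4 (Nr + 1),
        (2 * (Nr : ℝ) * (Nr.choose (k - 1) : ℝ))
          / ((2 * (Nr : ℝ) - ((k : ℝ) - 1)) * (((2 * Nr).choose (k - 1) : ℝ)))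
          * orderCDF (2 * Nr) k u
    + ∑ k ∈ Finset.Icc 4 (Nr + 2),
        (2 * ((Nr : ℝ) - 1) * (Nr.choose (k - 2) : ℝ))
          / ((2 * (Nr : ℝ) - ((k : ℝ) - 2)) * (2 * (Nr : ℝ) - ((k : ℝ) - 1))
              * (((2 * Nr).choose (k - 2) : ℝ)))
          * orderCDF (2 * Nr) k u

noncomputable def cf (n k i : ℕ) : ℝ :=
  (n.factorial : ℝ) * (((k - 1).choose i : ℝ)) * (-1 : ℝ) ^ i
        / (((n : ℝ) - (k : ℝ) + (i : ℝ) + 1) * ((n - k).factorial : ℝ)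
            * ((k - 1).factorial : ℝ))

noncomputable def Haux (Nr k : ℕ) (u : ℝ) : ℝ :=
  ∑ i ∈ Finset.range k, cf (2 * Nr) k i * u ^ (Nr + 2 + i - k)

noncomputable def Raux (Nr : ℕ) (u : ℝ) : ℝ :=
  ((Nr : ℝ) - 1) / (2 * (Nr : ℝ) - 1) * Haux Nr 2 u
    + ((Nr : ℝ) + 1) / (2 * (2 * (Nr : ℝ) - 1)) * Haux Nr 3 u
    + ∑ k ∈ Finset.Icc 4 (Nr + 1),
        (2 * (Nr : ℝ) * (Nr.choose (k - 1) : ℝ))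
          / ((2 * (Nr : ℝ) - ((k : ℝ) - 1)) * (((2 * Nr).choose (k - 1) : ℝ)))
          * Haux Nr k u
    + ∑ k ∈ Finset.Icc 4 (Nr + 2),
        (2 * ((Nr : ℝ) - 1) * (Nr.choose (k - 2) : ℝ))
          / ((2 * (Nr : ℝ) - ((k : ℝ) - 2)) * (2 * (Nr : ℝ) - ((k : ℝ) - 1))
              * (((2 * Nr).choose (k - 2) : ℝ)))
          * Haux Nr k u

lemma orderCDF_factor {Nr k : ℕ} (h2 : 2 ≤ Nr) (hk : k ≤ Nr + 2) (u : ℝ) :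
    orderCDF (2 * Nr) k u = u ^ (Nr - 1) * Haux Nr k u := by
  unfold orderCDF Haux cf
  rw [Finset.mul_sum]
  refine Finset.sum_congr rfl fun i _ => ?_
  rw [show 2 * Nr - k + i + 1 = (Nr - 1) + (Nr + 2 + i - k) by omega, pow_add]
  ring

lemma Q_SRS_factor {Nr : ℕ} (h2 : 2 ≤ Nr) (u : ℝ) :
    Q_SRS Nr u = u ^ (Nr - 1) * Raux Nr u := by
  have e2 := orderCDF_factor h2 (by omega : 2 ≤ Nr + 2) u
  have e3 := orderCDF_factor h2 (by omega : 3 ≤ Nr + 2) u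
  have es1 : ∀ k ∈ Finset.Icc 4 (Nr + 1),
      orderCDF (2 * Nr) k u = u ^ (Nr - 1) * Haux Nr k u := fun k hk =>
    orderCDF_factor h2 (by have := (Finset.mem_Icc.mp hk).2; omega) u
  have es2 : ∀ k ∈ Finset.Icc 4 (Nr + 2),
      orderCDF (2 * Nr) k u = u ^ (Nr - 1) * Haux Nr k u := fun k hk =>
    orderCDF_factor h2 (by have := (Finset.mem_Icc.mp hk).2; omega) u
  have S1 : ∑ k ∈ Finset.Icc 4 (Nr + 1),
        (2 * (Nr : ℝ) * (Nr.choose (k - 1) : ℝ))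
          / ((2 * (Nr : ℝ) - ((k : ℝ) - 1)) * (((2 * Nr).choose (k - 1) : ℝ)))
          * orderCDF (2 * Nr) k u
      = u ^ (Nr - 1) * ∑ k ∈ Finset.Icc 4 (Nr + 1),
        (2 * (Nr : ℝ) * (Nr.choose (k - 1) : ℝ))
          / ((2 * (Nr : ℝ) - ((k : ℝ) - 1)) * (((2 * Nr).choose (k - 1) : ℝ)))
          * Haux Nr k u := by
    rw [Finset.mul_sum]
    exact Finset.sum_congr rfl fun k hk => by rw [es1 k hk]; ring
  have S2 : ∑ k ∈ Finset.Icc 4 (Nr + 2),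
        (2 * ((Nr : ℝ) - 1) * (Nr.choose (k - 2) : ℝ))
          / ((2 * (Nr : ℝ) - ((k : ℝ) - 2)) * (2 * (Nr : ℝ) - ((k : ℝ) - 1))
              * (((2 * Nr).choose (k - 2) : ℝ)))
          * orderCDF (2 * Nr) k u
      = u ^ (Nr - 1) * ∑ k ∈ Finset.Icc 4 (Nr + 2),
        (2 * ((Nr : ℝ) - 1) * (Nr.choose (k - 2) : ℝ))
          / ((2 * (Nr : ℝ) - ((k : ℝ) - 2)) * (2 * (Nr : ℝ) - ((k : ℝ) - 1))
              * (((2 * Nr).choose (k - 2) : ℝ)))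
          * Haux Nr k u := by
    rw [Finset.mul_sum]
    exact Finset.sum_congr rfl fun k hk => by rw [es2 k hk]; ring
  unfold Q_SRS Raux
  rw [e2, e3, S1, S2]
  ring

lemma Haux_continuous (Nr k : ℕ) : Continuous fun u => Haux Nr k u := by
  unfold Haux
  exact continuous_finset_sum _ fun i _ => continuous_const.mul (continuous_pow _)

lemma Raux_continuous (Nr : ℕ) : Continuous fun u => Raux Nr u := by
  unfold Raux
  refine ((((continuous_const.mul (Haux_continuous Nr 2)).add
    (continuous_const.mul (Haux_continuous Nr 3))).add
    (continuous_finset_sum _ fun k _ => continuous_const.mul (Haux_continuous Nr k))).add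
    (continuous_finset_sum _ fun k _ => continuous_const.mul (Haux_continuous Nr k)))

lemma Haux_zero {Nr k : ℕ} (hk : k ≤ Nr + 1) : Haux Nr k 0 = 0 := by
  unfold Haux
  refine Finset.sum_eq_zero fun i _ => ?_
  rw [zero_pow (by omega), mul_zero]

lemma Haux_top (Nr : ℕ) : Haux Nr (Nr + 2) 0 = cf (2 * Nr) (Nr + 2) 0 := by
  unfold Haux
  rw [Finset.sum_eq_single_of_mem 0 (Finset.mem_range.mpr (by omega))]
  · simp
  · intro i _ hne
    rw [zero_pow (by omega), mul_zero]

lemma Raux_zero {Nr : ℕ} (h2 : 2 ≤ Nr) : Raux Nr 0 = 2 / ((Nr : ℝ) + 1) := by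
  unfold Raux
  rw [Haux_zero (by omega), Haux_zero (by omega),
    Finset.sum_eq_zero (fun k hk => by
      rw [Haux_zero (by have := (Finset.mem_Icc.mp hk).2; omega), mul_zero]),
    Finset.sum_eq_single_of_mem (Nr + 2)
      (Finset.mem_Icc.mpr ⟨by omega, le_refl _⟩)
      (fun k hk hne => by
        rw [Haux_zero (by have := (Finset.mem_Icc.mp hk).2; omega), mul_zero])]
  rw [Haux_top]
  unfold cf
  have hx1 : (Nr : ℝ) - 1 ≠ 0 := by
    have : (2:ℝ) ≤ (Nr:ℝ) := by exact_mod_cast h2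
    nlinarith
  have hx : (Nr : ℝ) ≠ 0 := by positivity
  have hx2 : (Nr : ℝ) + 1 ≠ 0 := by positivity
  have hc : ((2 * Nr).choose Nr : ℝ) ≠ 0 := by
    exact_mod_cast (Nat.choose_pos (by omega : Nr ≤ 2 * Nr)).ne'
  have hf1 : ((Nr - 2).factorial : ℝ) ≠ 0 := by
    exact_mod_cast (Nat.factorial_pos _).ne'
  have hf2 : ((Nr + 1).factorial : ℝ) ≠ 0 := by
    exact_mod_cast (Nat.factorial_pos _).ne'
  have key : ((2 * Nr).factorial : ℝ)
      = ((2 * Nr).choose Nr : ℝ) * (Nr.factorial : ℝ) * (Nr.factorial : ℝ) := by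
    have h := Nat.choose_mul_factorial_mul_factorial (show Nr ≤ 2 * Nr by omega)
    rw [show 2 * Nr - Nr = Nr by omega] at h
    exact_mod_cast h.symm
  have hfact : (Nr.factorial : ℝ)
      = (Nr : ℝ) * ((Nr : ℝ) - 1) * ((Nr - 2).factorial : ℝ) := by
    have a1 := Nat.factorial_succ (Nr - 1)
    rw [show Nr - 1 + 1 = Nr by omega] at a1
    have a2 := Nat.factorial_succ (Nr - 2)
    rw [show Nr - 2 + 1 = Nr - 1 by omega] at a2
    rw [a2] at a1
    rw [a1]
    push_cast [Nat.cast_sub (show 1 ≤ Nr by omega)]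
    ring
  have hfact2 : (((Nr + 1).factorial : ℕ) : ℝ) = ((Nr : ℝ) + 1) * (Nr.factorial : ℝ) := by
    have := Nat.factorial_succ Nr
    push_cast [this]
    ring
  have hfn : (Nr.factorial : ℝ) ≠ 0 := by exact_mod_cast (Nat.factorial_pos _).ne'
  rw [show (Nr + 2) - 2 = Nr by omega, show (Nr + 2) - 1 = Nr + 1 by omega,
    show 2 * Nr - (Nr + 2) = Nr - 2 by omega, Nat.choose_self, Nat.choose_zero_right,
    pow_zero, key, hfact2, hfact]
  push_cast
  have hBD : (2 * (Nr:ℝ) - ((Nr:ℝ) + 2 - 2)) * (2 * (Nr:ℝ) - ((Nr:ℝ) + 2 - 1))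
        * (((2 * Nr).choose Nr : ℕ) : ℝ) *
      ((2 * (Nr:ℝ) - ((Nr:ℝ) + 2) + 1) * (((Nr - 2).factorial : ℕ) : ℝ) *
        (((Nr:ℝ) + 1) * ((Nr:ℝ) * ((Nr:ℝ) - 1) * (((Nr - 2).factorial : ℕ) : ℝ)))) ≠ 0 := by
    have e : (2 * (Nr:ℝ) - ((Nr:ℝ) + 2 - 2)) * (2 * (Nr:ℝ) - ((Nr:ℝ) + 2 - 1))
        * (((2 * Nr).choose Nr : ℕ) : ℝ) *
      ((2 * (Nr:ℝ) - ((Nr:ℝ) + 2) + 1) * (((Nr - 2).factorial : ℕ) : ℝ) *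
        (((Nr:ℝ) + 1) * ((Nr:ℝ) * ((Nr:ℝ) - 1) * (((Nr - 2).factorial : ℕ) : ℝ))))
        = (Nr:ℝ)^2 * ((Nr:ℝ) - 1)^3 * ((Nr:ℝ) + 1) * (((2 * Nr).choose Nr : ℕ) : ℝ)
            * (((Nr - 2).factorial : ℕ) : ℝ)^2 := by ring
    rw [e]
    exact mul_ne_zero (mul_ne_zero (mul_ne_zero (mul_ne_zero (pow_ne_zero _ hx)
      (pow_ne_zero _ hx1)) hx2) hc) (pow_ne_zero _ hf1)
  simp only [mul_zero, add_zero, zero_add]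
  rw [div_mul_div_comm, div_eq_div_iff hBD hx2]
  ring

/-- Array gain advantage of SRS over naive RS: for `Nr ≥ 2`, with
`Q_naive(u) = u^{Nr−1}·(1 + u − u^{Nr})`,
`lim_{u→0⁺} Q_naive(u)/Q_SRS(u) = (Nr+1)/2`. -/
theorem naive_over_SRS_array_gain (Nr : ℕ) (hNr : 2 ≤ Nr) :
    Filter.Tendsto
      (fun u : ℝ => (u ^ (Nr - 1) * (1 + u - u ^ Nr)) / Q_SRS Nr u)
      (nhdsWithin 0 (Set.Ioi 0)) (nhds (((Nr : ℝ) + 1) / 2)) := by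
  have hR0 : Raux Nr 0 = 2 / ((Nr : ℝ) + 1) := Raux_zero hNr
  have hR0ne : Raux Nr 0 ≠ 0 := by
    rw [hR0]; positivity
  have hnum : Filter.Tendsto (fun u : ℝ => 1 + u - u ^ Nr) (nhds 0) (nhds 1) := by
    have : ContinuousAt (fun u : ℝ => 1 + u - u ^ Nr) 0 := by fun_prop
    have h0 : (fun u : ℝ => 1 + u - u ^ Nr) 0 = 1 := by
      simp [zero_pow (by omega : Nr ≠ 0)]
    have ht := this.tendsto
    norm_num at ht
    convert ht using 2
    rw [zero_pow (by omega : Nr ≠ 0)]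
    ring
  have hden : Filter.Tendsto (fun u : ℝ => Raux Nr u) (nhds 0) (nhds (Raux Nr 0)) :=
    (Raux_continuous Nr).continuousAt
  have hmain : Filter.Tendsto (fun u : ℝ => (1 + u - u ^ Nr) / Raux Nr u)
      (nhds 0) (nhds (((Nr : ℝ) + 1) / 2)) := by
    have := hnum.div hden hR0ne
    have : (1 : ℝ) / Raux Nr 0 = ((Nr : ℝ) + 1) / 2 := by
      rw [hR0, one_div_div]
    rw [← this]
    exact hnum.div hden hR0ne
  refine (hmain.mono_left nhdsWithin_le_nhds).congr' ?_
  filter_upwards [self_mem_nhdsWithin] with u hu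
  have hu0 : (u : ℝ) ^ (Nr - 1) ≠ 0 := pow_ne_zero _ (ne_of_gt hu)
  rw [Q_SRS_factor hNr, mul_div_mul_left _ _ hu0]
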